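/- Consider an instance of single-machine scheduling with one non-renewable resource in which there are exactly q = 2 supply dates, every job has processing time p_j = 1 and resource requirement equal to its weight, a_j = w_j > 0, the jobs are indexed so that w_1 ≥ w_2 ≥ … ≥ w_n, and ∑_{j=1}^n w_j ≤ b_2. For each j let ℓ(j) := min{ℓ ∈ {1,2} : ∑_{j'=1}^{j} w_{j'} ≤ b_ℓ}. Define the list schedule S by S_1 := u_{ℓ(1)} and S_j := max(S_{j−1} + 1, u_{ℓ(j)}) for j = 2, …, n. Then S is a feasible schedule, and for every feasible schedule S* it holds that ∑_{j=1}^n w_j·(S_j + 1) ≤ 2·∑_{j=1}^n w_j·(S*_j + 1); that is, scheduling the jobs in non-increasing weight order is a factor-2 approximation for minimizing ∑_j w_j C_j when there are two supplies. -/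

import Mathlib

open Classical

/-- Cumulative supply over the first `ℓ+1` supplies (0-based indexing of supplies). -/
noncomputable def cumSupply (btilde : ℕ → ℝ) (ℓ : ℕ) : ℝ :=
  ∑ k ∈ Finset.range (ℓ + 1), btilde k

/-- List schedule in job order `0, 1, …` for unit processing times and resource
requirements `a_j = w_j`: job `j` starts at the maximum of the previous job's
completion time and `u (ℓ(j))`, where `ℓ(j)` is the first supply period whose
cumulative supply covers the total weight of the first `j+1` jobs. -/
noncomputable def wListSched (w u btilde : ℕ → ℝ) : ℕ → ℝ
  | 0 => u (sInf {ℓ : ℕ | w 0 ≤ cumSupply btilde ℓ})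
  | (j + 1) => max (wListSched w u btilde j + 1)
      (u (sInf {ℓ : ℕ | ∑ j' ∈ Finset.range (j + 2), w j' ≤ cumSupply btilde ℓ}))

/-- Feasibility of a schedule `S` of `n` unit-time jobs (indexed `0, …, n-1`) with
resource requirements equal to the weights `w`, and `q` supplies at dates
`u 0 < u 1 < …` delivering `btilde` units. -/
def FeasibleW (n q : ℕ) (w u btilde : ℕ → ℝ) (S : ℕ → ℝ) : Prop :=
  (∀ j, j < n → 0 ≤ S j) ∧
  (∀ j, j < n → ∀ j', j' < n → j ≠ j' → S j + 1 ≤ S j' ∨ S j' + 1 ≤ S j) ∧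
  (∀ t : ℝ, 0 ≤ t → ∀ ℓ, ℓ < q → u ℓ ≤ t →
    (∀ ℓ', ℓ' < q → u ℓ' ≤ t → ℓ' ≤ ℓ) →
    ∑ j ∈ (Finset.range n).filter (fun j => S j ≤ t), w j ≤ cumSupply btilde ℓ)

lemma sum_distinct_ge : ∀ (t : Finset ℕ), (∀ x ∈ t, 1 ≤ x) →
    t.card * (t.card + 1) ≤ 2 * ∑ x ∈ t, x := by
  intro t
  induction t using Finset.induction_on_max with
  | empty => intro _; simp
  | insert a s ha ih =>
    intro h1
    have h1s : ∀ x ∈ s, 1 ≤ x := fun x hx => h1 x (Finset.mem_insert_of_mem hx)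
    have hins : a ∉ s := fun h => lt_irrefl a (ha a h)
    have hsub : s ⊆ Finset.Ico 1 a := fun x hx =>
      Finset.mem_Ico.mpr ⟨h1s x hx, ha x hx⟩
    have hcard : s.card ≤ a - 1 := by simpa using Finset.card_le_card hsub
    have ha1 : 1 ≤ a := h1 a (Finset.mem_insert_self a s)
    have hca : s.card + 1 ≤ a := by omega
    rw [Finset.sum_insert hins, Finset.card_insert_of_notMem hins]
    have := ih h1s
    nlinarith [this, hca]

lemma abel_identity (v x : ℕ → ℝ) : ∀ n : ℕ,
    ∑ j ∈ Finset.range n, v j * x j =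
      (∑ m ∈ Finset.range n, (v m - v (m+1)) * (∑ j ∈ Finset.range (m+1), x j))
        + v n * ∑ j ∈ Finset.range n, x j := by
  intro n
  induction n with
  | zero => simp
  | succ n ih =>
    rw [Finset.sum_range_succ (fun j => v j * x j), ih]
    rw [Finset.sum_range_succ (fun m => (v m - v (m+1)) * (∑ j ∈ Finset.range (m+1), x j))]
    rw [Finset.sum_range_succ x]
    ring

lemma card_spaced_le (s : Finset ℕ) (f : ℕ → ℝ) (c : ℝ) (hne : s.Nonempty)
    (h0 : ∀ j ∈ s, 0 ≤ f j) (hub : ∀ j ∈ s, f j ≤ c)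
    (hsp : ∀ j ∈ s, ∀ j' ∈ s, j ≠ j' → f j + 1 ≤ f j' ∨ f j' + 1 ≤ f j) :
    (s.card : ℝ) ≤ c + 1 := by
  obtain ⟨j0, hj0⟩ := hne
  have hc0 : 0 ≤ c := le_trans (h0 j0 hj0) (hub j0 hj0)
  have key : ∀ p ∈ s, ∀ q ∈ s, f p + 1 ≤ f q → ⌊f p⌋₊ < ⌊f q⌋₊ := by
    intro p hp q hq hle
    have h1 : ⌊f p + 1⌋₊ = ⌊f p⌋₊ + 1 := Nat.floor_add_one (h0 p hp)
    have h2 : ⌊f p + 1⌋₊ ≤ ⌊f q⌋₊ := Nat.floor_le_floor hle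
    omega
  have hinj : Set.InjOn (fun j => ⌊f j⌋₊) s := by
    intro a ha b hb hab
    by_contra hne'
    rcases hsp a ha b hb hne' with h | h
    · exact absurd hab (Nat.ne_of_lt (key a ha b hb h))
    · exact absurd hab.symm (Nat.ne_of_lt (key b hb a ha h))
  have hsubset : s.image (fun j => ⌊f j⌋₊) ⊆ Finset.range (⌊c⌋₊ + 1) := by
    intro y hy
    obtain ⟨j, hj, rfl⟩ := Finset.mem_image.mp hy
    exact Finset.mem_range.mpr (Nat.lt_succ_of_le (Nat.floor_le_floor (hub j hj)))
  have hcard : s.card ≤ ⌊c⌋₊ + 1 := by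
    calc s.card = (s.image (fun j => ⌊f j⌋₊)).card := (Finset.card_image_of_injOn hinj).symm
    _ ≤ ⌊c⌋₊ + 1 := by simpa using Finset.card_le_card hsubset
  calc (s.card : ℝ) ≤ (⌊c⌋₊ : ℝ) + 1 := by exact_mod_cast hcard
  _ ≤ c + 1 := by linarith [Nat.floor_le hc0]

/-- For `q = 2` supplies, unit processing times, `a_j = w_j > 0`,
jobs indexed in non-increasing weight order, and total weight at most the total
supply `b_2`, the list schedule in non-increasing weight order is feasible, and
its total weighted completion time is at most twice that of any feasible schedule. -/
theorem weight_order_two_approx_two_supplies (n : ℕ) (hn : 1 ≤ n)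
    (w : ℕ → ℝ) (hw : ∀ j, j < n → 0 < w j)
    (hsorted : ∀ i j, i ≤ j → j < n → w j ≤ w i)
    (u btilde : ℕ → ℝ)
    (hu0 : u 0 = 0)
    (humono : u 0 < u 1)
    (hbt0 : 0 < btilde 0) (hbt1 : 0 < btilde 1)
    (htot : ∑ j ∈ Finset.range n, w j ≤ cumSupply btilde 1) :
    FeasibleW n 2 w u btilde (wListSched w u btilde) ∧
    ∀ Sstar : ℕ → ℝ, FeasibleW n 2 w u btilde Sstar →
      ∑ j ∈ Finset.range n, w j * (wListSched w u btilde j + 1) ≤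
        2 * ∑ j ∈ Finset.range n, w j * (Sstar j + 1) := by
  classical
  set S : ℕ → ℝ := wListSched w u btilde with hSdef
  set P : ℕ → ℝ := fun m => ∑ j ∈ Finset.range m, w j with hPdef
  have hw0 : ∀ j, j < n → 0 ≤ w j := fun j hj => (hw j hj).le
  have hu1 : 0 < u 1 := by rw [hu0] at humono; exact humono
  have hcs0 : cumSupply btilde 0 = btilde 0 := by simp [cumSupply]
  have hPmono : ∀ a b : ℕ, a ≤ b → b ≤ n → P a ≤ P b := by
    intro a b hab hbn
    apply Finset.sum_le_sum_of_subset_of_nonneg (Finset.range_subset_range.mpr hab)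
    intro j hj _
    exact hw0 j (lt_of_lt_of_le (Finset.mem_range.mp hj) hbn)
  have htotP : P n ≤ cumSupply btilde 1 := htot
  have hsInfu : ∀ j, j < n →
      u (sInf {ℓ : ℕ | P (j+1) ≤ cumSupply btilde ℓ}) =
        (if P (j+1) ≤ btilde 0 then 0 else u 1) := by
    intro j hj
    by_cases h : P (j+1) ≤ btilde 0
    · have h0 : (0:ℕ) ∈ {ℓ : ℕ | P (j+1) ≤ cumSupply btilde ℓ} := by
        simp only [Set.mem_setOf_eq, hcs0]; exact h
      rw [Nat.sInf_eq_zero.mpr (Or.inl h0)]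
      simp [h, hu0]
    · have h1 : (1:ℕ) ∈ {ℓ : ℕ | P (j+1) ≤ cumSupply btilde ℓ} := by
        simp only [Set.mem_setOf_eq]
        exact le_trans (hPmono (j+1) n hj le_rfl) htotP
      have hle : sInf {ℓ : ℕ | P (j+1) ≤ cumSupply btilde ℓ} ≤ 1 := Nat.sInf_le h1
      have hne : sInf {ℓ : ℕ | P (j+1) ≤ cumSupply btilde ℓ} ≠ 0 := by
        intro h0
        have hmem := Nat.sInf_mem (⟨1, h1⟩ : {ℓ : ℕ | P (j+1) ≤ cumSupply btilde ℓ}.Nonempty)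
        rw [h0] at hmem
        simp only [Set.mem_setOf_eq, hcs0] at hmem
        exact h hmem
      have heq : sInf {ℓ : ℕ | P (j+1) ≤ cumSupply btilde ℓ} = 1 := by omega
      rw [heq]
      simp [h]
  have hS0 : S 0 = if P 1 ≤ btilde 0 then 0 else u 1 := by
    have e : {ℓ : ℕ | w 0 ≤ cumSupply btilde ℓ} = {ℓ : ℕ | P 1 ≤ cumSupply btilde ℓ} := by
      have : P 1 = w 0 := by simp [hPdef]
      rw [this]
    have e0 : S 0 = u (sInf {ℓ : ℕ | w 0 ≤ cumSupply btilde ℓ}) := rfl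
    rw [e0, e, hsInfu 0 hn]
  have hSsucc : ∀ j : ℕ, S (j+1) = max (S j + 1)
      (u (sInf {ℓ : ℕ | P (j+2) ≤ cumSupply btilde ℓ})) := fun j => rfl
  have hSsucc' : ∀ j : ℕ, j + 1 < n → S (j+1) = max (S j + 1)
      (if P (j+2) ≤ btilde 0 then 0 else u 1) := by
    intro j hj
    rw [hSsucc j]
    congr 1
    exact hsInfu (j+1) hj
  have hmain : ∀ j, j < n → (0 ≤ S j ∧
      S j + 1 ≤ ((j:ℝ)+1) + (if P (j+1) ≤ btilde 0 then 0 else u 1) ∧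
      (¬ P (j+1) ≤ btilde 0 → u 1 ≤ S j)) := by
    intro j
    induction j with
    | zero =>
      intro h0
      have e1 : (0:ℕ) + 1 = 1 := rfl
      rw [e1]
      refine ⟨?_, ?_, ?_⟩
      · rw [hS0]; split
        · exact le_rfl
        · exact hu1.le
      · rw [hS0]
        by_cases hc : P 1 ≤ btilde 0
        · rw [if_pos hc]; norm_num
        · rw [if_neg hc]; push_cast; linarith
      · intro h; rw [hS0, if_neg h]
    | succ j ih =>
      intro hj1
      have hjn : j < n := by omega
      obtain ⟨ih0, ih1, ih2⟩ := ih hjn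
      have e2 : j + 1 + 1 = j + 2 := rfl
      rw [e2] at *
      rw [hSsucc' j hj1]
      by_cases h2 : P (j+2) ≤ btilde 0
      · have h1 : P (j+1) ≤ btilde 0 :=
          le_trans (hPmono (j+1) (j+2) (by omega) (by omega)) h2
        rw [if_pos h2]
        rw [if_pos h1] at ih1
        refine ⟨le_max_right (S j + 1) 0, ?_, fun h => absurd h2 h⟩
        have hm : max (S j + 1) 0 ≤ (j:ℝ) + 1 := max_le (by linarith) (by positivity)
        push_cast
        linarith
      · rw [if_neg h2]
        refine ⟨le_trans hu1.le (le_max_right _ _), ?_, fun _ => le_max_right _ _⟩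
        have hite : (if P (j+1) ≤ btilde 0 then (0:ℝ) else u 1) ≤ u 1 := by
          split
          · exact hu1.le
          · exact le_rfl
        have hm : max (S j + 1) (u 1) ≤ (j:ℝ) + 1 + u 1 :=
          max_le (by linarith) (by linarith [Nat.cast_nonneg (α := ℝ) j])
        push_cast
        linarith
  have hstep : ∀ j : ℕ, S j + 1 ≤ S (j+1) := fun j => by
    rw [hSsucc j]; exact le_max_left _ _
  have hmono : ∀ j j' : ℕ, j < j' → S j + 1 ≤ S j' := by
    intro j j' h
    induction j' with
    | zero => omega
    | succ j'' ih =>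
      rcases Nat.lt_succ_iff_lt_or_eq.mp h with h' | h'
      · exact le_trans (ih h') (by linarith [hstep j''])
      · subst h'; exact hstep j
  have hfeasS : FeasibleW n 2 w u btilde S := by
    refine ⟨fun j hj => (hmain j hj).1, ?_, ?_⟩
    · intro j hj j' hj' hne
      rcases lt_or_gt_of_ne hne with h | h
      · exact Or.inl (hmono j j' h)
      · exact Or.inr (hmono j' j h)
    · intro t ht ℓ hℓ huℓ hmax
      interval_cases ℓ
      · have htu1 : t < u 1 := by
          by_contra h
          have := hmax 1 (by norm_num) (le_of_not_gt h)
          omega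
        rw [hcs0]
        have hsub : (Finset.range n).filter (fun j => S j ≤ t) ⊆
            (Finset.range n).filter (fun j => P (j+1) ≤ btilde 0) := by
          intro j hj
          rw [Finset.mem_filter] at *
          refine ⟨hj.1, ?_⟩
          by_contra h
          have := (hmain j (Finset.mem_range.mp hj.1)).2.2 h
          linarith [hj.2]
        have h2 : ∑ j ∈ (Finset.range n).filter (fun j => S j ≤ t), w j ≤
            ∑ j ∈ (Finset.range n).filter (fun j => P (j+1) ≤ btilde 0), w j :=
          Finset.sum_le_sum_of_subset_of_nonneg hsub
            (fun j hj _ => hw0 j (Finset.mem_range.mp (Finset.mem_filter.mp hj).1))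
        refine le_trans h2 ?_
        set G := (Finset.range n).filter (fun j => P (j+1) ≤ btilde 0) with hG
        rcases G.eq_empty_or_nonempty with hGe | hGne
        · rw [hGe]; simp; exact hbt0.le
        · have hjm := Finset.mem_filter.mp (G.max'_mem hGne)
          have hjmn : G.max' hGne < n := Finset.mem_range.mp hjm.1
          have hsub2 : G ⊆ Finset.range (G.max' hGne + 1) := fun x hx =>
            Finset.mem_range.mpr (Nat.lt_succ_of_le (Finset.le_max' G x hx))
          have h3 : ∑ j ∈ G, w j ≤ P (G.max' hGne + 1) :=
            Finset.sum_le_sum_of_subset_of_nonneg hsub2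
              (fun j hj _ => hw0 j (by
                have := Finset.mem_range.mp hj
                omega))
          exact le_trans h3 hjm.2
      · have h4 : ∑ j ∈ (Finset.range n).filter (fun j => S j ≤ t), w j ≤ P n :=
          Finset.sum_le_sum_of_subset_of_nonneg (Finset.filter_subset _ _)
            (fun j hj _ => hw0 j (Finset.mem_range.mp hj))
        exact le_trans h4 htotP
  refine ⟨hfeasS, ?_⟩
  intro Sstar hfeas
  obtain ⟨hpos, hspace, hres⟩ := hfeas
  set A := (Finset.range n).filter (fun j => Sstar j < u 1) with hA
  set B := (Finset.range n).filter (fun j => ¬ Sstar j < u 1) with hB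
  -- resource bound on the early set of Sstar
  have hwA : ∑ j ∈ A, w j ≤ btilde 0 := by
    rcases A.eq_empty_or_nonempty with hAe | hAne
    · rw [hAe]; simp; exact hbt0.le
    · obtain ⟨j0, hj0A, hj0⟩ := Finset.exists_mem_eq_sup' hAne Sstar
      set t0 := A.sup' hAne Sstar with ht0def
      have hj0m := Finset.mem_filter.mp hj0A
      have hj0n : j0 < n := Finset.mem_range.mp hj0m.1
      have ht00 : 0 ≤ t0 := by rw [hj0]; exact hpos j0 hj0n
      have ht0u : t0 < u 1 := by rw [hj0]; exact hj0m.2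
      have hmax1 : ∀ ℓ', ℓ' < 2 → u ℓ' ≤ t0 → ℓ' ≤ 0 := by
        intro ℓ' hℓ' hu'
        interval_cases ℓ'
        · exact le_rfl
        · linarith
      have hkey := hres t0 ht00 0 (by norm_num) (by rw [hu0]; exact ht00) hmax1
      rw [hcs0] at hkey
      refine le_trans ?_ hkey
      apply Finset.sum_le_sum_of_subset_of_nonneg
      · intro j hj
        have hjm := Finset.mem_filter.mp hj
        exact Finset.mem_filter.mpr ⟨hjm.1, Finset.le_sup' Sstar hj⟩
      · intro j hj _
        exact hw0 j (Finset.mem_range.mp (Finset.mem_filter.mp hj).1)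
  have hdist : ∀ j, j < n → ∀ j', j' < n → j ≠ j' → Sstar j ≠ Sstar j' := by
    intro j hj j' hj' hne heq
    rcases hspace j hj j' hj' hne with h | h <;> linarith
  -- within-class ranks
  set ρ : ℕ → ℕ := fun j => ((Finset.range n).filter
      (fun j' => ((Sstar j' < u 1) ↔ (Sstar j < u 1)) ∧ Sstar j' ≤ Sstar j)).card with hρ
  have F1 : ∀ j, j < n → 1 ≤ ρ j := by
    intro j hj
    apply Finset.card_pos.mpr
    exact ⟨j, Finset.mem_filter.mpr ⟨Finset.mem_range.mpr hj, Iff.rfl, le_rfl⟩⟩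
  have F2' : ∀ j j', j < n → j' < n → ((Sstar j < u 1) ↔ (Sstar j' < u 1)) →
      Sstar j < Sstar j' → ρ j < ρ j' := by
    intro j j' hj hj' hiff hlt
    apply Finset.card_lt_card
    rw [Finset.ssubset_iff_of_subset ?sub]
    case sub =>
      intro x hx
      have hxm := Finset.mem_filter.mp hx
      exact Finset.mem_filter.mpr ⟨hxm.1, hxm.2.1.trans hiff, le_trans hxm.2.2 hlt.le⟩
    refine ⟨j', Finset.mem_filter.mpr ⟨Finset.mem_range.mpr hj', Iff.rfl, le_rfl⟩, ?_⟩
    intro hmem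
    have := (Finset.mem_filter.mp hmem).2.2
    linarith
  have F3a : ∀ j, j < n → Sstar j < u 1 → (ρ j : ℝ) ≤ Sstar j + 1 := by
    intro j hj hcls
    apply card_spaced_le _ Sstar (Sstar j)
    · exact ⟨j, Finset.mem_filter.mpr ⟨Finset.mem_range.mpr hj, Iff.rfl, le_rfl⟩⟩
    · intro j' hj'
      exact hpos j' (Finset.mem_range.mp (Finset.mem_filter.mp hj').1)
    · intro j' hj'
      exact (Finset.mem_filter.mp hj').2.2
    · intro a ha b hb hab
      exact hspace a (Finset.mem_range.mp (Finset.mem_filter.mp ha).1)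
        b (Finset.mem_range.mp (Finset.mem_filter.mp hb).1) hab
  have F3b : ∀ j, j < n → ¬ Sstar j < u 1 → (ρ j : ℝ) + u 1 ≤ Sstar j + 1 := by
    intro j hj hcls
    have hkey : (ρ j : ℝ) ≤ (Sstar j - u 1) + 1 := by
      apply card_spaced_le _ (fun j' => Sstar j' - u 1) (Sstar j - u 1)
      · exact ⟨j, Finset.mem_filter.mpr ⟨Finset.mem_range.mpr hj, Iff.rfl, le_rfl⟩⟩
      · intro j' hj'
        have hm := Finset.mem_filter.mp hj'
        have : ¬ Sstar j' < u 1 := fun h => hcls (hm.2.1.mp h)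
        exact sub_nonneg.mpr (le_of_not_gt this)
      · intro j' hj'
        have := (Finset.mem_filter.mp hj').2.2
        linarith
      · intro a ha b hb hab
        rcases hspace a (Finset.mem_range.mp (Finset.mem_filter.mp ha).1)
          b (Finset.mem_range.mp (Finset.mem_filter.mp hb).1) hab with h | h
        · left; linarith
        · right; linarith
    linarith
  -- prefix rank sums
  have F4 : ∀ m, m ≤ n → (m : ℝ) * (m + 1) ≤ 4 * ∑ j ∈ Finset.range m, (ρ j : ℝ) := by
    intro m hm
    have hclass : ∀ C : Finset ℕ, C ⊆ Finset.range m →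
        (∀ a ∈ C, ∀ b ∈ C, ((Sstar a < u 1) ↔ (Sstar b < u 1))) →
        (C.card : ℝ) * (C.card + 1) ≤ 2 * ∑ j ∈ C, (ρ j : ℝ) := by
      intro C hCsub hCiff
      have hCn : ∀ j ∈ C, j < n := fun j hj =>
        lt_of_lt_of_le (Finset.mem_range.mp (hCsub hj)) hm
      have hinj : Set.InjOn ρ C := by
        intro a ha b hb hab
        by_contra hne'
        have hne2 : Sstar a ≠ Sstar b := hdist a (hCn a ha) b (hCn b hb) hne'
        rcases lt_or_gt_of_ne hne2 with h | h
        · exact absurd hab (Nat.ne_of_lt (F2' a b (hCn a ha) (hCn b hb) (hCiff a ha b hb) h))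
        · exact absurd hab.symm
            (Nat.ne_of_lt (F2' b a (hCn b hb) (hCn a ha) (hCiff b hb a ha) h))
      have ht := sum_distinct_ge (C.image ρ) ?ones
      case ones =>
        intro x hx
        obtain ⟨j, hj, rfl⟩ := Finset.mem_image.mp hx
        exact F1 j (hCn j hj)
      rw [Finset.card_image_of_injOn hinj, Finset.sum_image (fun a ha b hb => hinj ha hb)] at ht
      have ht' : (C.card * (C.card + 1) : ℝ) ≤ 2 * ∑ j ∈ C, (ρ j : ℝ) := by
        exact_mod_cast ht
      exact ht'
    set Am := (Finset.range m).filter (fun j => Sstar j < u 1) with hAm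
    set Bm := (Finset.range m).filter (fun j => ¬ Sstar j < u 1) with hBm
    have hAmc := hclass Am (Finset.filter_subset _ _) (by
      intro a ha b hb
      exact iff_of_true (Finset.mem_filter.mp ha).2 (Finset.mem_filter.mp hb).2)
    have hBmc := hclass Bm (Finset.filter_subset _ _) (by
      intro a ha b hb
      exact iff_of_false (Finset.mem_filter.mp ha).2 (Finset.mem_filter.mp hb).2)
    have hcards : Am.card + Bm.card = m := by
      rw [hAm, hBm]
      rw [Finset.card_filter_add_card_filter_not]
      exact Finset.card_range m
    have hsplit : ∑ j ∈ Finset.range m, (ρ j : ℝ) =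
        ∑ j ∈ Am, (ρ j : ℝ) + ∑ j ∈ Bm, (ρ j : ℝ) :=
      (Finset.sum_filter_add_sum_filter_not _ _ _).symm
    have hcr : (Am.card : ℝ) + (Bm.card : ℝ) = m := by exact_mod_cast hcards
    nlinarith [hAmc, hBmc, sq_nonneg ((Am.card : ℝ) - (Bm.card : ℝ))]
  -- Abel summation: weighted rank sum dominates half the sorted bound
  have hgauss : ∀ M : ℕ, ∑ j ∈ Finset.range M, ((j:ℝ)+1) = M*(M+1)/2 := by
    intro M
    induction M with
    | zero => simp
    | succ M ih => rw [Finset.sum_range_succ, ih]; push_cast; ring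
  set X := ∑ j ∈ Finset.range n, w j * ((j:ℝ)+1) with hX
  set R := ∑ j ∈ Finset.range n, w j * (ρ j : ℝ) with hR
  have hXR : X ≤ 2 * R := by
    set v : ℕ → ℝ := fun j => if j < n then w j else 0 with hv
    set x : ℕ → ℝ := fun j => (ρ j : ℝ) - ((j:ℝ)+1)/2 with hx
    have hid := abel_identity v x n
    have hvn : v n = 0 := if_neg (lt_irrefl n)
    have hterm : ∀ m ∈ Finset.range n,
        0 ≤ (v m - v (m+1)) * (∑ j ∈ Finset.range (m+1), x j) := by
      intro m hm
      have hmn := Finset.mem_range.mp hm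
      apply mul_nonneg
      · by_cases hm1 : m + 1 < n
        · have : v m = w m := if_pos hmn
          have h2 : v (m+1) = w (m+1) := if_pos hm1
          rw [this, h2, sub_nonneg]
          exact hsorted m (m+1) (by omega) hm1
        · have h3 : v (m+1) = 0 := if_neg hm1
          have h4 : v m = w m := if_pos hmn
          rw [h3, h4, sub_zero]
          exact hw0 m hmn
      · have hxsum : ∑ j ∈ Finset.range (m+1), x j =
            (∑ j ∈ Finset.range (m+1), (ρ j : ℝ)) -
              (∑ j ∈ Finset.range (m+1), ((j:ℝ)+1))/2 := by
          rw [hx]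
          rw [Finset.sum_sub_distrib, Finset.sum_div]
        have hF4 := F4 (m+1) (by omega)
        rw [hxsum, hgauss (m+1)]
        push_cast at hF4 ⊢
        linarith
    have h0le : 0 ≤ ∑ j ∈ Finset.range n, v j * x j := by
      rw [hid, hvn]
      simpa using Finset.sum_nonneg hterm
    have hvx : ∑ j ∈ Finset.range n, v j * x j =
        ∑ j ∈ Finset.range n, w j * x j := by
      apply Finset.sum_congr rfl
      intro j hj
      rw [hv]
      simp only [if_pos (Finset.mem_range.mp hj)]
    have hexp : ∑ j ∈ Finset.range n, w j * x j = R - X/2 := by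
      have hpt : ∀ j : ℕ, w j * x j = w j * (ρ j : ℝ) - (w j * ((j:ℝ)+1))/2 := by
        intro j
        show w j * ((ρ j : ℝ) - ((j:ℝ)+1)/2) = _
        ring
      calc ∑ j ∈ Finset.range n, w j * x j
          = ∑ j ∈ Finset.range n, (w j * (ρ j : ℝ) - (w j * ((j:ℝ)+1))/2) :=
            Finset.sum_congr rfl (fun j _ => hpt j)
        _ = R - X/2 := by
            rw [Finset.sum_sub_distrib, ← Finset.sum_div, hR, hX]
    rw [hvx, hexp] at h0le
    linarith
  -- the late set F of the list schedule
  set F := (Finset.range n).filter (fun j => ¬ P (j+1) ≤ btilde 0) with hF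
  have hALG : ∑ j ∈ Finset.range n, w j * (S j + 1) ≤ X + u 1 * ∑ j ∈ F, w j := by
    have hper : ∀ j ∈ Finset.range n, w j * (S j + 1) ≤
        w j * ((j:ℝ)+1) + (if ¬ P (j+1) ≤ btilde 0 then u 1 * w j else 0) := by
      intro j hj
      have hjn := Finset.mem_range.mp hj
      have hb := (hmain j hjn).2.1
      by_cases hc : P (j+1) ≤ btilde 0
      · rw [if_neg (not_not_intro hc)]
        rw [if_pos hc] at hb
        have := mul_le_mul_of_nonneg_left (by linarith : S j + 1 ≤ (j:ℝ)+1) (hw0 j hjn)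
        linarith
      · rw [if_pos hc]
        rw [if_neg hc] at hb
        have := mul_le_mul_of_nonneg_left (by linarith : S j + 1 ≤ ((j:ℝ)+1) + u 1) (hw0 j hjn)
        nlinarith [hw0 j hjn]
    calc ∑ j ∈ Finset.range n, w j * (S j + 1)
        ≤ ∑ j ∈ Finset.range n, (w j * ((j:ℝ)+1) +
            (if ¬ P (j+1) ≤ btilde 0 then u 1 * w j else 0)) := Finset.sum_le_sum hper
      _ = X + ∑ j ∈ Finset.range n, (if ¬ P (j+1) ≤ btilde 0 then u 1 * w j else 0) := by
          rw [Finset.sum_add_distrib, hX]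
      _ = X + ∑ j ∈ F, u 1 * w j := by rw [hF, Finset.sum_filter]
      _ = X + u 1 * ∑ j ∈ F, w j := by rw [Finset.mul_sum]
  have hOPT : R + u 1 * ∑ j ∈ B, w j ≤ ∑ j ∈ Finset.range n, w j * (Sstar j + 1) := by
    have hper : ∀ j ∈ Finset.range n,
        w j * (ρ j : ℝ) + (if ¬ Sstar j < u 1 then u 1 * w j else 0) ≤
          w j * (Sstar j + 1) := by
      intro j hj
      have hjn := Finset.mem_range.mp hj
      by_cases hc : Sstar j < u 1
      · rw [if_neg (not_not_intro hc)]
        have := mul_le_mul_of_nonneg_left (F3a j hjn hc) (hw0 j hjn)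
        linarith
      · rw [if_pos hc]
        have := mul_le_mul_of_nonneg_left (F3b j hjn hc) (hw0 j hjn)
        nlinarith [hw0 j hjn]
    calc R + u 1 * ∑ j ∈ B, w j
        = R + ∑ j ∈ B, u 1 * w j := by rw [Finset.mul_sum]
      _ = R + ∑ j ∈ Finset.range n, (if ¬ Sstar j < u 1 then u 1 * w j else 0) := by
          rw [hB, Finset.sum_filter]
      _ = ∑ j ∈ Finset.range n, (w j * (ρ j : ℝ) +
            (if ¬ Sstar j < u 1 then u 1 * w j else 0)) := by
          rw [Finset.sum_add_distrib, hR]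
      _ ≤ ∑ j ∈ Finset.range n, w j * (Sstar j + 1) := Finset.sum_le_sum hper
  have hBnn : 0 ≤ ∑ j ∈ B, w j :=
    Finset.sum_nonneg (fun j hj => hw0 j (Finset.mem_range.mp (Finset.mem_filter.mp hj).1))
  have hTB : ∑ j ∈ F, w j ≤ 2 * ∑ j ∈ B, w j := by
    rcases F.eq_empty_or_nonempty with hFe | hFne
    · rw [hFe]; simp; linarith
    · set k0 := F.min' hFne with hk0def
      have hk0m := Finset.mem_filter.mp (F.min'_mem hFne)
      have hk0n : k0 < n := Finset.mem_range.mp hk0m.1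
      have hk0P : btilde 0 < P (k0+1) := lt_of_not_ge hk0m.2
      have hFeq : F = Finset.Ico k0 n := by
        ext j
        simp only [hF, Finset.mem_filter, Finset.mem_range, Finset.mem_Ico]
        constructor
        · intro ⟨hj1, hj2⟩
          exact ⟨F.min'_le j (Finset.mem_filter.mpr ⟨Finset.mem_range.mpr hj1, hj2⟩), hj1⟩
        · intro ⟨hj1, hj2⟩
          refine ⟨hj2, not_le.mpr (lt_of_lt_of_le hk0P (hPmono (k0+1) (j+1) (by omega) (by omega)))⟩
      have hFsum : ∑ j ∈ F, w j = P n - P k0 := by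
        rw [hFeq, Finset.sum_Ico_eq_sub w hk0n.le]
      have hex : ∃ i, i ≤ k0 ∧ i ∈ B := by
        by_contra h
        push_neg at h
        have hsubA : Finset.range (k0+1) ⊆ A := by
          intro i hi
          have hik : i ≤ k0 := by
            have := Finset.mem_range.mp hi; omega
          have hin : i < n := by omega
          have hiB := h i hik
          rw [hB, Finset.mem_filter] at hiB
          push_neg at hiB
          exact Finset.mem_filter.mpr ⟨Finset.mem_range.mpr hin,
            hiB (Finset.mem_range.mpr hin)⟩
        have hPA : P (k0+1) ≤ ∑ j ∈ A, w j :=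
          Finset.sum_le_sum_of_subset_of_nonneg hsubA
            (fun j hj _ => hw0 j (Finset.mem_range.mp (Finset.mem_filter.mp hj).1))
        linarith
      obtain ⟨i, hik, hiB⟩ := hex
      have hin : i < n := Finset.mem_range.mp (Finset.mem_filter.mp hiB).1
      have hwk : w k0 ≤ ∑ j ∈ B, w j := by
        calc w k0 ≤ w i := hsorted i k0 hik hk0n
          _ ≤ ∑ j ∈ B, w j := Finset.single_le_sum
              (fun j hj => hw0 j (Finset.mem_range.mp (Finset.mem_filter.mp hj).1)) hiB
      have hAB : ∑ j ∈ A, w j + ∑ j ∈ B, w j = P n := by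
        rw [hA, hB, hPdef]
        exact Finset.sum_filter_add_sum_filter_not _ _ _
      have hPk : P (k0+1) = P k0 + w k0 := by
        rw [hPdef]
        exact Finset.sum_range_succ w k0
      linarith
  have hu1F : u 1 * ∑ j ∈ F, w j ≤ u 1 * (2 * ∑ j ∈ B, w j) :=
    mul_le_mul_of_nonneg_left hTB hu1.le
  calc ∑ j ∈ Finset.range n, w j * (S j + 1)
      ≤ X + u 1 * ∑ j ∈ F, w j := hALG
    _ ≤ 2 * R + 2 * (u 1 * ∑ j ∈ B, w j) := by linarith
    _ = 2 * (R + u 1 * ∑ j ∈ B, w j) := by ring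
    _ ≤ 2 * ∑ j ∈ Finset.range n, w j * (Sstar j + 1) := by linarith
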